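/- For every n ≥ 1: if m ≥ 2 then D(n,m) is path-connected, and if m ≥ 3 then D(n,m) is simply connected (path-connected with trivial fundamental group). -/

import Mathlib

noncomputable section

/-- Evaluation at `x` of the monic polynomial `x^n + ∑_{j<n} c_j x^j` determined by the
coefficient vector `c`. -/
def evalMonic (n : ℕ) (c : Fin n → ℝ) (x : ℝ) : ℝ :=
  x ^ n + ∑ j : Fin n, c j * x ^ (j : ℕ)

/-- `D(n,m)`: the space of `(m+1)`-tuples of monic real polynomials of degree `n`
(recorded by their lower-order coefficient vectors, i.e. as a subspace of `ℝ^{n(m+1)}`)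
having no common real root. -/
def Dspace (n m : ℕ) : Set (Fin (m + 1) → Fin n → ℝ) :=
  {c | ∀ x : ℝ, ∃ i, evalMonic n (c i) x ≠ 0}

namespace DAux

open Set Metric Module
open scoped ENNReal


open Set Metric Module

/-- affine combination -/
lemma evalMonic_comb {N : ℕ} (a b : ℝ) (hab : a + b = 1) (c d : Fin N → ℝ) (x : ℝ) :
    evalMonic N (a • c + b • d) x = a * evalMonic N c x + b * evalMonic N d x := by
  unfold evalMonic
  have h : ∀ j ∈ Finset.univ, (a • c + b • d) j * x ^ (j : ℕ)
      = a * (c j * x ^ (j:ℕ)) + b * (d j * x ^ (j:ℕ)) := by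
    intro j _
    simp only [Pi.add_apply, Pi.smul_apply, smul_eq_mul]
    ring
  rw [Finset.sum_congr rfl h, Finset.sum_add_distrib, ← Finset.mul_sum, ← Finset.mul_sum]
  linear_combination (-(x ^ N)) * hab

lemma mem_Dspace {n m : ℕ} (c : Fin (m+1) → Fin n → ℝ) :
    c ∈ Dspace n m ↔ ∀ x : ℝ, ∃ i, evalMonic n (c i) x ≠ 0 := Iff.rfl

/-- Parametrization of tuples having a common root. -/
def Phi (n m : ℕ) (p : ℝ × (Fin (m+1) → Fin n → ℝ)) : Fin (m+1) → Fin (n+1) → ℝ :=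
  fun i => Fin.cons (-(p.1^(n+1) + ∑ j : Fin n, p.2 i j * p.1^((j:ℕ)+1))) (p.2 i)

lemma compl_subset_range_Phi (n m : ℕ) : (Dspace (n+1) m)ᶜ ⊆ Set.range (Phi n m) := by
  intro c hc
  simp only [Dspace, mem_compl_iff, mem_setOf_eq] at hc
  push_neg at hc
  obtain ⟨x, hx⟩ := hc
  refine ⟨(x, fun i j => c i j.succ), ?_⟩
  funext i j
  refine Fin.cases ?_ ?_ j
  · have h := hx i
    unfold evalMonic at h
    rw [Fin.sum_univ_succ] at h
    simp only [Phi, Fin.cons_zero]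
    simp only [Fin.val_zero, pow_zero, mul_one, Fin.val_succ] at h
    linarith
  · intro j'
    simp [Phi]

lemma contDiff_coord {m n : ℕ} (i : Fin (m+1)) (j : Fin n) :
    ContDiff ℝ 1 (fun a : (Fin (m+1) → Fin n → ℝ) => a i j) :=
  contDiff_pi.mp ((contDiff_pi.mp contDiff_id) i) j

lemma contDiff_Phi (n m : ℕ) : ContDiff ℝ 1 (Phi n m) := by
  rw [contDiff_pi]
  intro i
  rw [contDiff_pi]
  intro j
  refine Fin.cases ?_ ?_ j
  · simp only [Phi, Fin.cons_zero]
    refine ContDiff.neg (ContDiff.add (contDiff_fst.pow _) (ContDiff.sum fun j' _ => ?_))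
    exact ((contDiff_coord i j').comp contDiff_snd).mul (contDiff_fst.pow _)
  · intro j'
    simp only [Phi, Fin.cons_succ]
    exact (contDiff_coord i j').comp contDiff_snd



/-- far field nonvanishing -/
lemma evalMonic_ne_zero {n : ℕ} (c : Fin (n+1) → ℝ) (x : ℝ)
    (hx : 1 + ∑ j, |c j| ≤ |x|) : evalMonic (n+1) c x ≠ 0 := by
  have hS : (0:ℝ) ≤ ∑ j, |c j| := Finset.sum_nonneg fun j _ => abs_nonneg _
  have h1 : (1:ℝ) ≤ |x| := by linarith
  have hpow : (1:ℝ) ≤ |x| ^ n := one_le_pow₀ h1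
  have hb : |∑ j : Fin (n+1), c j * x ^ (j:ℕ)| ≤ (∑ j, |c j|) * |x| ^ n := by
    calc |∑ j : Fin (n+1), c j * x ^ (j:ℕ)| ≤ ∑ j : Fin (n+1), |c j * x ^ (j:ℕ)| :=
          Finset.abs_sum_le_sum_abs _ _
      _ ≤ ∑ j : Fin (n+1), |c j| * |x| ^ n := by
          refine Finset.sum_le_sum fun j _ => ?_
          rw [abs_mul, abs_pow]
          exact mul_le_mul_of_nonneg_left
            (pow_le_pow_right₀ h1 (Nat.lt_succ_iff.mp j.isLt)) (abs_nonneg _)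
      _ = (∑ j, |c j|) * |x| ^ n := by rw [Finset.sum_mul]
  have hxn : |x| ^ (n+1) = |x| * |x| ^ n := by ring
  have hgt : (∑ j, |c j|) * |x| ^ n < |x| ^ (n+1) := by
    rw [hxn]
    have : (∑ j, |c j|) + 1 ≤ |x| := by linarith
    nlinarith
  intro h0
  unfold evalMonic at h0
  have : ∑ j : Fin (n+1), c j * x ^ (j:ℕ) = -x^(n+1) := by linarith
  rw [this, abs_neg, abs_pow] at hb
  linarith

lemma continuous_evalMonic_pair {n m : ℕ} (i : Fin (m+1)) :
    Continuous (fun z : (Fin (m+1) → Fin n → ℝ) × ℝ => evalMonic n (z.1 i) z.2) := by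
  unfold evalMonic
  refine (continuous_snd.pow n).add (continuous_finset_sum _ fun j _ => ?_)
  fun_prop

lemma isOpen_Dspace (n m : ℕ) : IsOpen (Dspace (n+1) m) := by
  rw [Metric.isOpen_iff]
  intro c hc
  set R : ℝ := 1 + ∑ j, (|c 0 j| + 1) with hR
  -- tube lemma on [-R, R]
  set U : Set ((Fin (m+1) → Fin (n+1) → ℝ) × ℝ) :=
    ⋃ i : Fin (m+1), (fun z : (Fin (m+1) → Fin (n+1) → ℝ) × ℝ =>
        evalMonic (n+1) (z.1 i) z.2) ⁻¹' ({0}ᶜ) with hU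
  have hUopen : IsOpen U :=
    isOpen_iUnion fun i => (isOpen_compl_singleton).preimage (continuous_evalMonic_pair i)
  have hsub : {c} ×ˢ (Icc (-R) R) ⊆ U := by
    rintro ⟨c', x⟩ ⟨hc', _⟩
    simp only [mem_singleton_iff] at hc'
    subst hc'
    obtain ⟨i, hi⟩ := hc x
    exact mem_iUnion.mpr ⟨i, hi⟩
  obtain ⟨u, v, hu, _, hcu, hKv, huv⟩ :=
    generalized_tube_lemma isCompact_singleton isCompact_Icc hUopen hsub
  obtain ⟨ε, hε, hball⟩ := Metric.isOpen_iff.mp hu c (hcu rfl)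
  refine ⟨min ε 1, by positivity, fun c' hc' => ?_⟩
  have hc'u : c' ∈ u := hball (lt_of_lt_of_le (mem_ball.mp hc') (min_le_left _ _))
  have hdist : dist c' c < 1 := lt_of_lt_of_le (mem_ball.mp hc') (min_le_right _ _)
  intro x
  by_cases hx : x ∈ Icc (-R) R
  · have := huv (Set.mk_mem_prod hc'u (hKv hx))
    rw [hU, mem_iUnion] at this
    obtain ⟨i, hi⟩ := this
    exact ⟨i, hi⟩
  · refine ⟨0, evalMonic_ne_zero _ _ ?_⟩
    have hR0 : (0:ℝ) ≤ ∑ j, (|c 0 j| + 1) :=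
      Finset.sum_nonneg fun j _ => by positivity
    have hxR : R ≤ |x| := by
      rcases not_and_or.mp hx with h | h
      · push_neg at h
        exact le_abs.mpr (Or.inr (by linarith))
      · push_neg at h
        exact le_abs.mpr (Or.inl h.le)
    refine le_trans ?_ hxR
    have hcc : ∀ j, |c' 0 j| ≤ |c 0 j| + 1 := by
      intro j
      have h1 : dist (c' 0 j) (c 0 j) ≤ dist (c' 0) (c 0) := dist_le_pi_dist _ _ j
      have h2 : dist (c' 0) (c 0) ≤ dist c' c := dist_le_pi_dist _ _ 0
      have h3 := abs_sub_abs_le_abs_sub (c' 0 j) (c 0 j)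
      rw [Real.dist_eq] at h1
      linarith
    have hsum := Finset.sum_le_sum (fun j (_ : j ∈ Finset.univ) => hcc j)
    rw [hR]
    linarith


lemma dimH_image_le_finrank {F E' : Type*} [NormedAddCommGroup F] [NormedSpace ℝ F]
    [FiniteDimensional ℝ F] [NormedAddCommGroup E'] [NormedSpace ℝ E'] (g : F → E') {s : Set F}
    (hg : ContDiffOn ℝ 1 g s) (hs : Convex ℝ s) :
    dimH (g '' s) ≤ (finrank ℝ F : ℝ≥0∞) :=
  (hg.dimH_image_le hs Subset.rfl).trans
    ((dimH_mono (subset_univ s)).trans_eq (Real.dimH_univ_eq_finrank F))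

lemma exists_avoid {E' : Type*} [NormedAddCommGroup E'] [NormedSpace ℝ E']
    [FiniteDimensional ℝ E'] {ι : Type*} [Countable ι] (bad : ι → Set E') (d : ℕ)
    (hd : d < finrank ℝ E') (h : ∀ i, dimH (bad i) ≤ (d : ℝ≥0∞)) :
    ∃ w, ∀ i, w ∉ bad i := by
  have hdim : dimH (⋃ i, bad i) < (finrank ℝ E' : ℝ≥0∞) := by
    rw [dimH_iUnion]
    exact lt_of_le_of_lt (iSup_le h) (by exact_mod_cast hd)
  have hdense : Dense (⋃ i, bad i)ᶜ := dense_compl_of_dimH_lt_finrank hdim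
  obtain ⟨w, hw⟩ := hdense.nonempty
  exact ⟨w, by simpa using hw⟩

lemma finrank_ES (n m : ℕ) : finrank ℝ (Fin (m+1) → Fin n → ℝ) = (m+1) * n := by
  rw [Module.finrank_pi_fintype]
  simp [Module.finrank_pi]

/-- solving for w in a straight segment -/
def Theta (n m : ℕ) (c : Fin (m+1) → Fin (n+1) → ℝ)
    (z : ℝ × (ℝ × (Fin (m+1) → Fin n → ℝ))) : Fin (m+1) → Fin (n+1) → ℝ :=
  z.1⁻¹ • (Phi n m z.2 - (1 - z.1) • c)

lemma contDiffOn_Theta (n m : ℕ) (c : Fin (m+1) → Fin (n+1) → ℝ) (k : ℕ) :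
    ContDiffOn ℝ 1 (Theta n m c)
      ((Icc (1/(k+1):ℝ) 1) ×ˢ (univ : Set (ℝ × (Fin (m+1) → Fin n → ℝ)))) := by
  have hinv : ContDiffOn ℝ 1 (fun z : ℝ × (ℝ × (Fin (m+1) → Fin n → ℝ)) => z.1⁻¹)
      ((Icc (1/(k+1):ℝ) 1) ×ˢ univ) := by
    refine (contDiff_fst.contDiffOn).inv fun z hz => ?_
    have h := hz.1.1
    have hpos : (0:ℝ) < 1/((k:ℝ)+1) := by positivity
    exact ne_of_gt (lt_of_lt_of_le hpos h)
  refine hinv.smul (ContDiff.contDiffOn ?_)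
  exact ((contDiff_Phi n m).comp contDiff_snd).sub ((contDiff_const.sub contDiff_fst).smul
    contDiff_const)

lemma one_div_le_of_pos {t : ℝ} (ht : 0 < t) : ∃ k : ℕ, 1/((k:ℝ)+1) ≤ t := by
  obtain ⟨k, hk⟩ := exists_nat_gt (1/t)
  refine ⟨k, ?_⟩
  rw [div_le_iff₀ (by positivity)]
  rw [div_lt_iff₀ ht] at hk
  nlinarith

/-- If w avoids all Theta-images then segment from c to w lies in Dspace -/
lemma segment_mem (n m : ℕ) (c : Fin (m+1) → Fin (n+1) → ℝ) (hc : c ∈ Dspace (n+1) m)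
    (w : Fin (m+1) → Fin (n+1) → ℝ)
    (hw : ∀ k : ℕ, w ∉ Theta n m c '' ((Icc (1/(k+1):ℝ) 1) ×ˢ univ)) :
    ∀ t ∈ Icc (0:ℝ) 1, (1-t) • c + t • w ∈ Dspace (n+1) m := by
  intro t ht
  by_contra hbad
  rcases eq_or_lt_of_le ht.1 with h0 | h0
  · rw [← h0] at hbad; simp at hbad; exact hbad hc
  obtain ⟨k, hk⟩ := one_div_le_of_pos h0
  obtain ⟨p, hp⟩ := compl_subset_range_Phi n m hbad
  have h2 : t • w = Phi n m p - (1-t) • c := by rw [hp]; module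
  have h3 : w = Theta n m c (t, p) := by
    unfold Theta
    rw [← h2, smul_smul, inv_mul_cancel₀ (ne_of_gt h0), one_smul]
  exact hw k ⟨(t, p), ⟨⟨hk, ht.2⟩, trivial⟩, h3.symm⟩

lemma joinedIn_of_segment {n m : ℕ} {c d : Fin (m+1) → Fin (n+1) → ℝ}
    (h : ∀ t ∈ Icc (0:ℝ) 1, (1-t) • c + t • d ∈ Dspace (n+1) m) :
    JoinedIn (Dspace (n+1) m) c d := by
  refine ⟨⟨⟨fun τ => (1 - (τ:ℝ)) • c + (τ:ℝ) • d, by continuity⟩, by simp, by simp⟩,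
    fun τ => h τ τ.2⟩

/-- base point -/
def bpt (n m : ℕ) : Fin (m+1) → Fin (n+1) → ℝ :=
  fun i j => if (i:ℕ) = 1 ∧ (j:ℕ) = 0 then 1 else 0

lemma bpt_mem (n m : ℕ) (hm : 1 ≤ m) : bpt n m ∈ Dspace (n+1) m := by
  intro x
  have h0 : evalMonic (n+1) (bpt n m 0) x = x^(n+1) := by
    unfold evalMonic bpt
    simp
  have h1 : evalMonic (n+1) (bpt n m ⟨1, by omega⟩) x = x^(n+1) + 1 := by
    unfold evalMonic bpt
    rw [Fin.sum_univ_succ]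
    simp
  by_cases hx : x^(n+1) = 0
  · exact ⟨⟨1, by omega⟩, by rw [h1, hx]; norm_num⟩
  · exact ⟨0, by rw [h0]; exact hx⟩

lemma joined_to_of_mem (n m : ℕ) (hm : 2 ≤ m) (c d : Fin (m+1) → Fin (n+1) → ℝ)
    (hc : c ∈ Dspace (n+1) m) (hd : d ∈ Dspace (n+1) m) :
    JoinedIn (Dspace (n+1) m) c d := by
  have hfr : finrank ℝ (ℝ × (ℝ × (Fin (m+1) → Fin n → ℝ))) = 2 + (m+1)*n := by
    rw [Module.finrank_prod, Module.finrank_prod, Module.finrank_self, finrank_ES]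
    omega
  have hdimlt : 2 + (m+1)*n < finrank ℝ (Fin (m+1) → Fin (n+1) → ℝ) := by
    rw [finrank_ES]
    have h : (m+1)*(n+1) = (m+1)*n + (m+1) := by ring
    omega
  obtain ⟨w, hw⟩ := exists_avoid (ι := ℕ × Bool)
    (fun z => Theta n m (bif z.2 then c else d) '' ((Icc (1/((z.1:ℝ)+1)) 1) ×ˢ univ))
    (2 + (m+1)*n) hdimlt
    (fun z => (dimH_image_le_finrank _ (contDiffOn_Theta n m _ z.1)
      ((convex_Icc _ _).prod convex_univ)).trans_eq (by rw [hfr]))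
  have h1 := segment_mem n m c hc w (fun k => hw (k, true))
  have h2 := segment_mem n m d hd w (fun k => hw (k, false))
  exact (joinedIn_of_segment h1).trans (joinedIn_of_segment h2).symm

lemma isPathConnected_Dspace (n m : ℕ) (hm : 2 ≤ m) : IsPathConnected (Dspace (n+1) m) := by
  refine ⟨bpt n m, bpt_mem n m (by omega), ?_⟩
  intro y hy
  exact joined_to_of_mem n m hm _ _ (bpt_mem n m (by omega)) hy




def mkPath (n m : ℕ) (x y : ↥(Dspace (n+1) m)) (r : ℝ → (Fin (m+1) → Fin (n+1) → ℝ))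
    (hc : Continuous r) (hmem : ∀ s ∈ Icc (0:ℝ) 1, r s ∈ Dspace (n+1) m)
    (h0 : r 0 = ↑x) (h1 : r 1 = ↑y) : Path x y where
  toFun := fun s => ⟨r s, hmem s s.2⟩
  continuous_toFun := Continuous.subtype_mk (hc.comp continuous_subtype_val) _
  source' := Subtype.ext (by simpa using h0)
  target' := Subtype.ext (by simpa using h1)

@[simp] lemma mkPath_coe (n m : ℕ) (x y : ↥(Dspace (n+1) m)) (r : ℝ → _) (hc) (hmem) (h0) (h1)
    (s : unitInterval) : (↑(mkPath n m x y r hc hmem h0 h1 s) : Fin (m+1) → Fin (n+1) → ℝ)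
      = r ↑s := rfl

lemma homotopic_of_square (n m : ℕ) (x y : ↥(Dspace (n+1) m)) (p q : Path x y)
    (G : ℝ → ℝ → (Fin (m+1) → Fin (n+1) → ℝ))
    (hG : Continuous fun z : ℝ × ℝ => G z.1 z.2)
    (hmem : ∀ t ∈ Icc (0:ℝ) 1, ∀ s ∈ Icc (0:ℝ) 1, G t s ∈ Dspace (n+1) m)
    (ht0 : ∀ s : unitInterval, G 0 ↑s = ↑(p s))
    (ht1 : ∀ s : unitInterval, G 1 ↑s = ↑(q s))
    (hs0 : ∀ t ∈ Icc (0:ℝ) 1, G t 0 = ↑x) (hs1 : ∀ t ∈ Icc (0:ℝ) 1, G t 1 = ↑y) :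
    p.Homotopic q := by
  refine ⟨⟨⟨⟨fun z => ⟨G ↑z.1 ↑z.2, hmem ↑z.1 z.1.2 ↑z.2 z.2.2⟩, ?_⟩, ?_, ?_⟩, ?_⟩⟩
  · have hcoe : Continuous fun z : unitInterval × unitInterval => ((z.1 : ℝ), (z.2 : ℝ)) :=
      (continuous_subtype_val.comp continuous_fst).prodMk
        (continuous_subtype_val.comp continuous_snd)
    exact Continuous.subtype_mk (hG.comp hcoe) _
  · intro s; exact Subtype.ext (ht0 s)
  · intro s; exact Subtype.ext (ht1 s)
  · intro t s hs
    simp only [Set.mem_insert_iff, Set.mem_singleton_iff] at hs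
    rcases hs with rfl | rfl
    · refine Subtype.ext ?_
      simpa [p.source] using hs0 ↑t t.2
    · refine Subtype.ext ?_
      simpa [p.target] using hs1 ↑t t.2

lemma contDiff_polyeval (P : Polynomial ℝ) : ContDiff ℝ 1 fun s : ℝ => P.eval s := by
  have h : (fun s : ℝ => P.eval s)
      = fun s => ∑ i ∈ Finset.range (P.natDegree + 1), P.coeff i * s ^ i := by
    funext s; exact P.eval_eq_sum_range s
  rw [h]
  exact ContDiff.sum fun i _ => contDiff_const.mul (contDiff_id.pow i)

lemma exists_poly_path (n m : ℕ) (x y : ↥(Dspace (n+1) m)) (p : Path x y) :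
    ∃ (r : ℝ → (Fin (m+1) → Fin (n+1) → ℝ)) (hsm : ContDiff ℝ 1 r)
      (hmem : ∀ s ∈ Icc (0:ℝ) 1, r s ∈ Dspace (n+1) m) (h0 : r 0 = ↑x) (h1 : r 1 = ↑y),
      p.Homotopic (mkPath n m x y r hsm.continuous hmem h0 h1) := by
  classical
  set F : ℝ → (Fin (m+1) → Fin (n+1) → ℝ) :=
    fun s => ↑(p (Set.projIcc (0:ℝ) 1 zero_le_one s)) with hF
  have hFcont : Continuous F :=
    continuous_subtype_val.comp (p.continuous.comp continuous_projIcc)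
  have hFs : ∀ s : unitInterval, F ↑s = ↑(p s) := by
    intro s
    simp only [hF]
    congr 1
    exact congrArg p (Set.projIcc_val zero_le_one s)
  have hF0 : F 0 = ↑x := by
    have := hFs 0
    simpa [p.source] using this
  have hF1 : F 1 = ↑y := by
    have := hFs 1
    simpa [p.target] using this
  have hFmem : ∀ s : ℝ, F s ∈ Dspace (n+1) m := fun s => (p _).2
  -- compact image and thickening
  have hK : IsCompact (F '' (Icc (0:ℝ) 1)) := (isCompact_Icc).image hFcont
  have hKD : F '' (Icc (0:ℝ) 1) ⊆ Dspace (n+1) m := by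
    rintro z ⟨s, _, rfl⟩; exact hFmem s
  obtain ⟨δ, hδ, hthick⟩ := hK.exists_thickening_subset_open (isOpen_Dspace n m) hKD
  set ε := δ/4 with hε
  have hεpos : 0 < ε := by positivity
  have happrox : ∀ (i : Fin (m+1)) (j : Fin (n+1)), ∃ P : Polynomial ℝ,
      ∀ s ∈ Icc (0:ℝ) 1, |P.eval s - F s i j| < ε := by
    intro i j
    exact exists_polynomial_near_of_continuousOn 0 1 (fun s => F s i j)
      (((continuous_apply j).comp ((continuous_apply i).comp hFcont)).continuousOn) ε hεpos
  choose P hP using happrox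
  set r : ℝ → (Fin (m+1) → Fin (n+1) → ℝ) := fun s i j =>
    (P i j).eval s + (1-s)*(F 0 i j - (P i j).eval 0)
      + s*(F 1 i j - (P i j).eval 1) with hr
  have hsm : ContDiff ℝ 1 r := by
    rw [contDiff_pi]; intro i; rw [contDiff_pi]; intro j
    exact ((contDiff_polyeval (P i j)).add
      ((contDiff_const.sub contDiff_id).mul contDiff_const)).add
      (contDiff_id.mul contDiff_const)
  have hclose : ∀ s ∈ Icc (0:ℝ) 1, dist (r s) (F s) < δ := by
    intro s hs
    rw [dist_pi_lt_iff hδ]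
    intro i
    rw [dist_pi_lt_iff hδ]
    intro j
    have h1 := hP i j s hs
    have h2 := hP i j 0 (by constructor <;> norm_num)
    have h3 := hP i j 1 (by constructor <;> norm_num)
    rw [Real.dist_eq]
    simp only [hr]
    have e1 : |F 0 i j - (P i j).eval 0| < ε := by rw [abs_sub_comm]; exact h2
    have e2 : |F 1 i j - (P i j).eval 1| < ε := by rw [abs_sub_comm]; exact h3
    have hb : |(P i j).eval s + (1-s)*(F 0 i j - (P i j).eval 0)
        + s*(F 1 i j - (P i j).eval 1) - F s i j|
        ≤ |(P i j).eval s - F s i j| + (1-s)*|F 0 i j - (P i j).eval 0|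
          + s*|F 1 i j - (P i j).eval 1| := by
      have t1 : (P i j).eval s + (1-s)*(F 0 i j - (P i j).eval 0)
          + s*(F 1 i j - (P i j).eval 1) - F s i j
          = ((P i j).eval s - F s i j) + (1-s)*(F 0 i j - (P i j).eval 0)
            + s*(F 1 i j - (P i j).eval 1) := by ring
      rw [t1]
      refine (abs_add_le _ _).trans ?_
      gcongr
      refine (abs_add_le _ _).trans ?_
      gcongr
      · rw [abs_mul, abs_of_nonneg (by linarith [hs.2] : (0:ℝ) ≤ 1 - s)]
      · rw [abs_mul, abs_of_nonneg hs.1]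
    have hss : (1-s)*|F 0 i j - (P i j).eval 0| + s*|F 1 i j - (P i j).eval 1| ≤ ε := by
      have b1 : (1-s)*|F 0 i j - (P i j).eval 0| ≤ (1-s)*ε := by
        apply mul_le_mul_of_nonneg_left e1.le (by linarith [hs.2])
      have b2 : s*|F 1 i j - (P i j).eval 1| ≤ s*ε := by
        apply mul_le_mul_of_nonneg_left e2.le hs.1
      nlinarith
    calc |(P i j).eval s + (1-s)*(F 0 i j - (P i j).eval 0)
        + s*(F 1 i j - (P i j).eval 1) - F s i j| ≤ _ := hb
      _ < ε + ε := by linarith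
      _ < δ := by rw [hε]; linarith
  have hmem : ∀ s ∈ Icc (0:ℝ) 1, r s ∈ Dspace (n+1) m := by
    intro s hs
    apply hthick
    rw [Metric.mem_thickening_iff]
    exact ⟨F s, ⟨s, hs, rfl⟩, hclose s hs⟩
  have h0 : r 0 = ↑x := by
    rw [← hF0]; funext i j; simp only [hr]; ring
  have h1 : r 1 = ↑y := by
    rw [← hF1]; funext i j; simp only [hr]; ring
  refine ⟨r, hsm, hmem, h0, h1, ?_⟩
  refine homotopic_of_square n m x y _ _ (fun t s => (1-t) • F s + t • r s) ?_ ?_ ?_ ?_ ?_ ?_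
  · apply Continuous.add
    · exact (continuous_const.sub continuous_fst).smul (hFcont.comp continuous_snd)
    · exact continuous_fst.smul (hsm.continuous.comp continuous_snd)
  · intro t ht s hs
    apply hthick
    rw [Metric.mem_thickening_iff]
    refine ⟨F s, ⟨s, hs, rfl⟩, ?_⟩
    have hdiff : (1-t) • F s + t • r s - F s = t • (r s - F s) := by module
    rw [dist_eq_norm, hdiff, norm_smul]
    calc ‖t‖ * ‖r s - F s‖ ≤ 1 * ‖r s - F s‖ := by
          apply mul_le_mul_of_nonneg_right _ (norm_nonneg _)
          rw [Real.norm_eq_abs, abs_of_nonneg ht.1]; exact ht.2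
      _ = ‖r s - F s‖ := one_mul _
      _ < δ := by rw [← dist_eq_norm]; exact hclose s hs
  · intro s
    show (1-(0:ℝ)) • F ↑s + (0:ℝ) • r ↑s = ↑(p s)
    rw [hFs s]; module
  · intro s
    show (1-(1:ℝ)) • F ↑s + (1:ℝ) • r ↑s = ↑(mkPath n m x y r hsm.continuous hmem h0 h1 s)
    rw [mkPath_coe]; module
  · intro t ht
    show (1-t) • F 0 + t • r 0 = ↑x
    rw [hF0, h0]; module
  · intro t ht
    show (1-t) • F 1 + t • r 1 = ↑y
    rw [hF1, h1]; module



def wedgeFun {n m : ℕ} (xE yE w : Fin (m+1) → Fin (n+1) → ℝ) (s : ℝ) :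
    Fin (m+1) → Fin (n+1) → ℝ :=
  if s ≤ 1/2 then (1-2*s) • xE + (2*s) • w else (2-2*s) • w + (2*s-1) • yE

lemma continuous_wedgeFun {n m : ℕ} (xE yE w : Fin (m+1) → Fin (n+1) → ℝ) :
    Continuous (wedgeFun xE yE w) := by
  unfold wedgeFun
  refine Continuous.if_le ?_ ?_ continuous_id continuous_const ?_
  · exact ((continuous_const.sub (continuous_const.mul continuous_id)).smul
      continuous_const).add ((continuous_const.mul continuous_id).smul continuous_const)
  · exact ((continuous_const.sub (continuous_const.mul continuous_id)).smul
      continuous_const).add (((continuous_const.mul continuous_id).sub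
      continuous_const).smul continuous_const)
  · intro s hs
    subst hs
    norm_num

lemma wedgeFun_zero {n m : ℕ} (xE yE w : Fin (m+1) → Fin (n+1) → ℝ) :
    wedgeFun xE yE w 0 = xE := by
  unfold wedgeFun
  rw [if_pos (by norm_num)]
  module

lemma wedgeFun_one {n m : ℕ} (xE yE w : Fin (m+1) → Fin (n+1) → ℝ) :
    wedgeFun xE yE w 1 = yE := by
  unfold wedgeFun
  rw [if_neg (by norm_num)]
  module

def Theta1 (n m : ℕ) (r : ℝ → (Fin (m+1) → Fin (n+1) → ℝ)) (xE : Fin (m+1) → Fin (n+1) → ℝ)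
    (z : (ℝ × ℝ) × (ℝ × (Fin (m+1) → Fin n → ℝ))) : Fin (m+1) → Fin (n+1) → ℝ :=
  (2 * z.1.1 * z.1.2)⁻¹ • (Phi n m z.2 - (1 - z.1.1) • r z.1.2 - (z.1.1 * (1 - 2*z.1.2)) • xE)

def Theta2 (n m : ℕ) (r : ℝ → (Fin (m+1) → Fin (n+1) → ℝ)) (yE : Fin (m+1) → Fin (n+1) → ℝ)
    (z : (ℝ × ℝ) × (ℝ × (Fin (m+1) → Fin n → ℝ))) : Fin (m+1) → Fin (n+1) → ℝ :=
  (2 * z.1.1 * (1 - z.1.2))⁻¹ •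
    (Phi n m z.2 - (1 - z.1.1) • r z.1.2 - (z.1.1 * (2*z.1.2 - 1)) • yE)

def T1set (n m k : ℕ) : Set ((ℝ × ℝ) × (ℝ × (Fin (m+1) → Fin n → ℝ))) :=
  (Icc (1/(k+1):ℝ) 1 ×ˢ Icc (1/(k+1):ℝ) (1/2)) ×ˢ univ

def T2set (n m k : ℕ) : Set ((ℝ × ℝ) × (ℝ × (Fin (m+1) → Fin n → ℝ))) :=
  (Icc (1/(k+1):ℝ) 1 ×ˢ Icc (1/2:ℝ) (1 - 1/(k+1))) ×ˢ univ

lemma convex_T1set (n m k : ℕ) : Convex ℝ (T1set n m k) :=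
  ((convex_Icc _ _).prod (convex_Icc _ _)).prod convex_univ

lemma convex_T2set (n m k : ℕ) : Convex ℝ (T2set n m k) :=
  ((convex_Icc _ _).prod (convex_Icc _ _)).prod convex_univ

lemma contDiffOn_Theta1 (n m : ℕ) (r : ℝ → (Fin (m+1) → Fin (n+1) → ℝ))
    (hr : ContDiff ℝ 1 r) (xE : Fin (m+1) → Fin (n+1) → ℝ) (k : ℕ) :
    ContDiffOn ℝ 1 (Theta1 n m r xE) (T1set n m k) := by
  have hinv : ContDiffOn ℝ 1
      (fun z : (ℝ × ℝ) × (ℝ × (Fin (m+1) → Fin n → ℝ)) => (2 * z.1.1 * z.1.2)⁻¹)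
      (T1set n m k) := by
    refine ContDiffOn.inv ?_ ?_
    · exact ((contDiff_const.mul (contDiff_fst.comp contDiff_fst)).mul
        (contDiff_snd.comp contDiff_fst)).contDiffOn
    · rintro ⟨⟨t, s⟩, p⟩ hz
      have h1 : (1/(k+1):ℝ) ≤ t := hz.1.1.1
      have h2 : (1/(k+1):ℝ) ≤ s := hz.1.2.1
      have hp : (0:ℝ) < 1/(k+1) := by positivity
      have : (0:ℝ) < 2 * t * s := by nlinarith
      exact ne_of_gt this
  refine hinv.smul (ContDiff.contDiffOn ?_)
  refine ContDiff.sub (ContDiff.sub ?_ ?_) ?_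
  · exact (contDiff_Phi n m).comp contDiff_snd
  · exact (contDiff_const.sub (contDiff_fst.comp contDiff_fst)).smul
      (hr.comp (contDiff_snd.comp contDiff_fst))
  · exact ((contDiff_fst.comp contDiff_fst).mul
      (contDiff_const.sub (contDiff_const.mul (contDiff_snd.comp contDiff_fst)))).smul
      contDiff_const

lemma contDiffOn_Theta2 (n m : ℕ) (r : ℝ → (Fin (m+1) → Fin (n+1) → ℝ))
    (hr : ContDiff ℝ 1 r) (yE : Fin (m+1) → Fin (n+1) → ℝ) (k : ℕ) :
    ContDiffOn ℝ 1 (Theta2 n m r yE) (T2set n m k) := by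
  have hinv : ContDiffOn ℝ 1
      (fun z : (ℝ × ℝ) × (ℝ × (Fin (m+1) → Fin n → ℝ)) => (2 * z.1.1 * (1 - z.1.2))⁻¹)
      (T2set n m k) := by
    refine ContDiffOn.inv ?_ ?_
    · exact ((contDiff_const.mul (contDiff_fst.comp contDiff_fst)).mul
        (contDiff_const.sub (contDiff_snd.comp contDiff_fst))).contDiffOn
    · rintro ⟨⟨t, s⟩, p⟩ hz
      have h1 : (1/(k+1):ℝ) ≤ t := hz.1.1.1
      have h2 : s ≤ 1 - 1/(k+1) := hz.1.2.2
      have hp : (0:ℝ) < 1/(k+1) := by positivity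
      have : (0:ℝ) < 2 * t * (1 - s) := by nlinarith
      exact ne_of_gt this
  refine hinv.smul (ContDiff.contDiffOn ?_)
  refine ContDiff.sub (ContDiff.sub ?_ ?_) ?_
  · exact (contDiff_Phi n m).comp contDiff_snd
  · exact (contDiff_const.sub (contDiff_fst.comp contDiff_fst)).smul
      (hr.comp (contDiff_snd.comp contDiff_fst))
  · exact ((contDiff_fst.comp contDiff_fst).mul
      ((contDiff_const.mul (contDiff_snd.comp contDiff_fst)).sub contDiff_const)).smul
      contDiff_const

lemma wedge_coverage (n m : ℕ) (r : ℝ → (Fin (m+1) → Fin (n+1) → ℝ))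
    (xE yE w : Fin (m+1) → Fin (n+1) → ℝ)
    (hmem : ∀ s ∈ Icc (0:ℝ) 1, r s ∈ Dspace (n+1) m)
    (hr0 : r 0 = xE) (hr1 : r 1 = yE)
    (hxE : xE ∈ Dspace (n+1) m) (hyE : yE ∈ Dspace (n+1) m)
    (hw1 : ∀ k, w ∉ Theta1 n m r xE '' T1set n m k)
    (hw2 : ∀ k, w ∉ Theta2 n m r yE '' T2set n m k) :
    ∀ t ∈ Icc (0:ℝ) 1, ∀ s ∈ Icc (0:ℝ) 1,
      (1-t) • r s + t • wedgeFun xE yE w s ∈ Dspace (n+1) m := by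
  intro t ht s hs
  by_contra hbad
  rcases eq_or_lt_of_le ht.1 with h0 | h0
  · apply hbad
    have : (1-t) • r s + t • wedgeFun xE yE w s = r s := by rw [← h0]; module
    rw [this]
    exact hmem s hs
  rcases eq_or_lt_of_le hs.1 with hs0 | hs0
  · apply hbad
    have : (1-t) • r s + t • wedgeFun xE yE w s = xE := by
      rw [← hs0, wedgeFun_zero, hr0]
      module
    rw [this]
    exact hxE
  rcases eq_or_lt_of_le hs.2 with hs1 | hs1
  · apply hbad
    have : (1-t) • r s + t • wedgeFun xE yE w s = yE := by
      rw [hs1, wedgeFun_one, hr1]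
      module
    rw [this]
    exact hyE
  obtain ⟨pphi, hpphi⟩ := compl_subset_range_Phi n m hbad
  by_cases hhalf : s ≤ 1/2
  · obtain ⟨k, hk⟩ := one_div_le_of_pos (show (0:ℝ) < min t s from lt_min h0 hs0)
    have hkt : (1/(k+1):ℝ) ≤ t := hk.trans (min_le_left _ _)
    have hks : (1/(k+1):ℝ) ≤ s := hk.trans (min_le_right _ _)
    have hts : (0:ℝ) < 2*t*s := by nlinarith
    have h2 : (2*t*s) • w = Phi n m pphi - (1-t) • r s - (t*(1-2*s)) • xE := by
      rw [hpphi]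
      unfold wedgeFun
      rw [if_pos hhalf]
      module
    apply hw1 k
    refine ⟨((t,s),pphi), ⟨⟨⟨hkt, ht.2⟩, ⟨hks, hhalf⟩⟩, trivial⟩, ?_⟩
    show Theta1 n m r xE ((t,s),pphi) = w
    unfold Theta1
    rw [← h2, smul_smul, inv_mul_cancel₀ (ne_of_gt hts), one_smul]
  · push_neg at hhalf
    obtain ⟨k, hk⟩ := one_div_le_of_pos (show (0:ℝ) < min t (1-s) from
      lt_min h0 (by linarith))
    have hkt : (1/(k+1):ℝ) ≤ t := hk.trans (min_le_left _ _)
    have hks : (1/(k+1):ℝ) ≤ 1-s := hk.trans (min_le_right _ _)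
    have hts : (0:ℝ) < 2*t*(1-s) := by nlinarith
    have h2 : (2*t*(1-s)) • w = Phi n m pphi - (1-t) • r s - (t*(2*s-1)) • yE := by
      rw [hpphi]
      unfold wedgeFun
      rw [if_neg (by linarith)]
      module
    apply hw2 k
    refine ⟨((t,s),pphi), ⟨⟨⟨hkt, ht.2⟩, ⟨hhalf.le, by linarith⟩⟩, trivial⟩, ?_⟩
    show Theta2 n m r yE ((t,s),pphi) = w
    unfold Theta2
    rw [← h2, smul_smul, inv_mul_cancel₀ (ne_of_gt hts), one_smul]

lemma paths_homotopic (n m : ℕ) (hm : 3 ≤ m) (x y : ↥(Dspace (n+1) m))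
    (p q : Path x y) : p.Homotopic q := by
  obtain ⟨r₁, hsm₁, hmem₁, h10, h11, hp⟩ := exists_poly_path n m x y p
  obtain ⟨r₂, hsm₂, hmem₂, h20, h21, hq⟩ := exists_poly_path n m x y q
  have hfr : finrank ℝ ((ℝ × ℝ) × (ℝ × (Fin (m+1) → Fin n → ℝ))) = 3 + (m+1)*n := by
    rw [Module.finrank_prod, Module.finrank_prod, Module.finrank_prod, Module.finrank_self,
      finrank_ES]
    omega
  have hdimlt : 3 + (m+1)*n < finrank ℝ (Fin (m+1) → Fin (n+1) → ℝ) := by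
    rw [finrank_ES]
    have h : (m+1)*(n+1) = (m+1)*n + (m+1) := by ring
    omega
  have hdims : ∀ z : ℕ × Bool × Bool,
      dimH (if z.2.1 then Theta1 n m (if z.2.2 then r₁ else r₂) (↑x) '' T1set n m z.1
        else Theta2 n m (if z.2.2 then r₁ else r₂) (↑y) '' T2set n m z.1)
        ≤ ((3+(m+1)*n : ℕ) : ℝ≥0∞) := by
    rintro ⟨k, b1, b2⟩
    cases b1 <;> cases b2 <;>
      simp only [if_true, if_false, Bool.false_eq_true, Bool.true_eq_false] <;>
      first
      | exact (dimH_image_le_finrank _ (contDiffOn_Theta2 n m _ hsm₂ _ k)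
          (convex_T2set n m k)).trans_eq (by rw [hfr])
      | exact (dimH_image_le_finrank _ (contDiffOn_Theta2 n m _ hsm₁ _ k)
          (convex_T2set n m k)).trans_eq (by rw [hfr])
      | exact (dimH_image_le_finrank _ (contDiffOn_Theta1 n m _ hsm₂ _ k)
          (convex_T1set n m k)).trans_eq (by rw [hfr])
      | exact (dimH_image_le_finrank _ (contDiffOn_Theta1 n m _ hsm₁ _ k)
          (convex_T1set n m k)).trans_eq (by rw [hfr])
  obtain ⟨w, hw⟩ := exists_avoid (ι := ℕ × Bool × Bool)
    (fun z => if z.2.1 then Theta1 n m (if z.2.2 then r₁ else r₂) ↑x '' T1set n m z.1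
      else Theta2 n m (if z.2.2 then r₁ else r₂) ↑y '' T2set n m z.1)
    (3+(m+1)*n) hdimlt hdims
  have hw11 : ∀ k, w ∉ Theta1 n m r₁ ↑x '' T1set n m k := by
    intro k; have := hw (k, true, true); simpa using this
  have hw21 : ∀ k, w ∉ Theta2 n m r₁ ↑y '' T2set n m k := by
    intro k; have := hw (k, false, true); simpa using this
  have hw12 : ∀ k, w ∉ Theta1 n m r₂ ↑x '' T1set n m k := by
    intro k; have := hw (k, true, false); simpa using this
  have hw22 : ∀ k, w ∉ Theta2 n m r₂ ↑y '' T2set n m k := by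
    intro k; have := hw (k, false, false); simpa using this
  have hcov1 := wedge_coverage n m r₁ ↑x ↑y w hmem₁ h10 h11 x.2 y.2 hw11 hw21
  have hcov2 := wedge_coverage n m r₂ ↑x ↑y w hmem₂ h20 h21 x.2 y.2 hw12 hw22
  have hwmem : ∀ s ∈ Icc (0:ℝ) 1, wedgeFun (↑x) (↑y) w s ∈ Dspace (n+1) m := by
    intro s hs
    have := hcov1 1 ⟨zero_le_one, le_refl 1⟩ s hs
    have heq : (1-(1:ℝ)) • r₁ s + (1:ℝ) • wedgeFun (↑x) (↑y) w s
        = wedgeFun (↑x) (↑y) w s := by module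
    rwa [heq] at this
  have hom1 : (mkPath n m x y r₁ hsm₁.continuous hmem₁ h10 h11).Homotopic
      (mkPath n m x y (wedgeFun (↑x) (↑y) w) (continuous_wedgeFun _ _ _) hwmem
        (wedgeFun_zero _ _ _) (wedgeFun_one _ _ _)) := by
    refine homotopic_of_square n m x y _ _
      (fun t s => (1-t) • r₁ s + t • wedgeFun (↑x) (↑y) w s) ?_ hcov1 ?_ ?_ ?_ ?_
    · apply Continuous.add
      · exact (continuous_const.sub continuous_fst).smul
          (hsm₁.continuous.comp continuous_snd)
      · exact continuous_fst.smul ((continuous_wedgeFun _ _ _).comp continuous_snd)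
    · intro s
      show (1-(0:ℝ)) • r₁ ↑s + (0:ℝ) • wedgeFun (↑x) (↑y) w ↑s = _
      rw [mkPath_coe]; module
    · intro s
      show (1-(1:ℝ)) • r₁ ↑s + (1:ℝ) • wedgeFun (↑x) (↑y) w ↑s = _
      rw [mkPath_coe]; module
    · intro t ht
      show (1-t) • r₁ 0 + t • wedgeFun (↑x) (↑y) w 0 = ↑x
      rw [h10, wedgeFun_zero]; module
    · intro t ht
      show (1-t) • r₁ 1 + t • wedgeFun (↑x) (↑y) w 1 = ↑y
      rw [h11, wedgeFun_one]; module
  have hom2 : (mkPath n m x y r₂ hsm₂.continuous hmem₂ h20 h21).Homotopic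
      (mkPath n m x y (wedgeFun (↑x) (↑y) w) (continuous_wedgeFun _ _ _) hwmem
        (wedgeFun_zero _ _ _) (wedgeFun_one _ _ _)) := by
    refine homotopic_of_square n m x y _ _
      (fun t s => (1-t) • r₂ s + t • wedgeFun (↑x) (↑y) w s) ?_ hcov2 ?_ ?_ ?_ ?_
    · apply Continuous.add
      · exact (continuous_const.sub continuous_fst).smul
          (hsm₂.continuous.comp continuous_snd)
      · exact continuous_fst.smul ((continuous_wedgeFun _ _ _).comp continuous_snd)
    · intro s
      show (1-(0:ℝ)) • r₂ ↑s + (0:ℝ) • wedgeFun (↑x) (↑y) w ↑s = _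
      rw [mkPath_coe]; module
    · intro s
      show (1-(1:ℝ)) • r₂ ↑s + (1:ℝ) • wedgeFun (↑x) (↑y) w ↑s = _
      rw [mkPath_coe]; module
    · intro t ht
      show (1-t) • r₂ 0 + t • wedgeFun (↑x) (↑y) w 0 = ↑x
      rw [h20, wedgeFun_zero]; module
    · intro t ht
      show (1-t) • r₂ 1 + t • wedgeFun (↑x) (↑y) w 1 = ↑y
      rw [h21, wedgeFun_one]; module
  exact hp.trans (hom1.trans ((hq.trans hom2).symm))


lemma pathConnectedSpace_main (n m : ℕ) (hm : 2 ≤ m) :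
    PathConnectedSpace ↥(Dspace (n+1) m) :=
  isPathConnected_iff_pathConnectedSpace.mp (isPathConnected_Dspace n m hm)

lemma simplyConnected_main (n m : ℕ) (hm : 3 ≤ m) :
    SimplyConnectedSpace ↥(Dspace (n+1) m) := by
  rw [simply_connected_iff_paths_homotopic']
  exact ⟨pathConnectedSpace_main n m (by omega),
    fun {x y} p q => paths_homotopic n m hm x y p q⟩

end DAux

/-- For every `n ≥ 1`: if `m ≥ 2` then `D(n,m)` is path-connected, and if `m ≥ 3` then
`D(n,m)` is simply connected. -/
theorem dspace_connectivity (n m : ℕ) (hn : 1 ≤ n) :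
    (2 ≤ m → PathConnectedSpace ↥(Dspace n m)) ∧
    (3 ≤ m → SimplyConnectedSpace ↥(Dspace n m)) := by
  obtain ⟨n', rfl⟩ : ∃ k, n = k + 1 := ⟨n - 1, by omega⟩
  exact ⟨fun hm => DAux.pathConnectedSpace_main n' m hm,
    fun hm => DAux.simplyConnected_main n' m hm⟩

end
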